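/- Let λ and μ be finite positive Radon measures on the unit sphere S^{N-1} ⊂ ℝ^N, and let ν be a finite positive Radon measure on ℝ^N with ν({0}) = 0. Suppose ∫_{S^{N-1}} |ξ·σ|² dλ(σ) = (1/2)∫_{S^{N-1}} |ξ·σ|² dμ(σ) + ∫_{ℝ^N} (1 - cos(z·ξ))/|z|² dν(z) for every ξ ∈ ℝ^N. Then ∫_{S^{N-1}} |ξ·σ|² dλ(σ) = (1/2)∫_{S^{N-1}} |ξ·σ|² dμ(σ) for all ξ, and ν = 0. -/

import Mathlib

open MeasureTheory

/-- If finite positive measures `λ`, `μ` on `S^{N-1}` and a finite positive measure `ν` on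
`ℝ^N` with `ν {0} = 0` satisfy
`∫ |ξ·σ|² dλ = (1/2)∫ |ξ·σ|² dμ + ∫ (1-cos(z·ξ))/|z|² dν` for all `ξ`, then
`∫ |ξ·σ|² dλ = (1/2)∫ |ξ·σ|² dμ` for all `ξ` and `ν = 0`. -/
theorem stmt13 {N : ℕ}
    (lam mu : Measure (Metric.sphere (0 : EuclideanSpace ℝ (Fin N)) 1))
    [IsFiniteMeasure lam] [IsFiniteMeasure mu]
    (ν : Measure (EuclideanSpace ℝ (Fin N))) [IsFiniteMeasure ν]
    (hν0 : ν {0} = 0)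
    (h : ∀ ξ : EuclideanSpace ℝ (Fin N),
      ∫ σ, (inner ℝ ξ (σ : EuclideanSpace ℝ (Fin N)) : ℝ) ^ 2 ∂lam =
        (1 / 2) * ∫ σ, (inner ℝ ξ (σ : EuclideanSpace ℝ (Fin N)) : ℝ) ^ 2 ∂mu +
          ∫ z, (1 - Real.cos (inner ℝ z ξ)) / ‖z‖ ^ 2 ∂ν) :
    (∀ ξ : EuclideanSpace ℝ (Fin N),
      ∫ σ, (inner ℝ ξ (σ : EuclideanSpace ℝ (Fin N)) : ℝ) ^ 2 ∂lam =
        (1 / 2) * ∫ σ, (inner ℝ ξ (σ : EuclideanSpace ℝ (Fin N)) : ℝ) ^ 2 ∂mu) ∧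
      ν = 0 := by
  have hcos : ∀ t : ℝ, 1 - Real.cos t ≤ t ^ 2 / 2 := fun t => by
    nlinarith [Real.one_sub_sq_div_two_le_cos (x := t)]
  have hg_nonneg : ∀ (ξ z : EuclideanSpace ℝ (Fin N)),
      (0:ℝ) ≤ (1 - Real.cos (inner ℝ z ξ)) / ‖z‖ ^ 2 := fun ξ z =>
    div_nonneg (by nlinarith [Real.cos_le_one (inner ℝ z ξ : ℝ)]) (by positivity)
  have hg_bound : ∀ (ξ z : EuclideanSpace ℝ (Fin N)),
      (1 - Real.cos (inner ℝ z ξ)) / ‖z‖ ^ 2 ≤ ‖ξ‖ ^ 2 / 2 := by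
    intro ξ z
    rcases eq_or_ne z 0 with rfl | hz
    · simp only [inner_zero_left, Real.cos_zero, sub_self, zero_div]
      positivity
    · have hz2 : (0:ℝ) < ‖z‖ ^ 2 := pow_pos (norm_pos_iff.mpr hz) 2
      rw [div_le_iff₀ hz2]
      have h1 : 1 - Real.cos (inner ℝ z ξ) ≤ (inner ℝ z ξ : ℝ) ^ 2 / 2 := hcos _
      have h2 : (inner ℝ z ξ : ℝ) ^ 2 ≤ ‖z‖ ^ 2 * ‖ξ‖ ^ 2 := by
        have := abs_real_inner_le_norm z ξ
        nlinarith [abs_nonneg (inner ℝ z ξ : ℝ), sq_abs (inner ℝ z ξ : ℝ)]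
      nlinarith
  have hg_meas : ∀ ξ : EuclideanSpace ℝ (Fin N),
      Measurable (fun z : EuclideanSpace ℝ (Fin N) =>
        (1 - Real.cos (inner ℝ z ξ)) / ‖z‖ ^ 2) := by
    intro ξ
    have h1 : Continuous fun z : EuclideanSpace ℝ (Fin N) => (inner ℝ z ξ : ℝ) :=
      continuous_id.inner continuous_const
    exact ((continuous_const.sub (Real.continuous_cos.comp h1)).measurable).div
      ((continuous_norm.pow 2).measurable)
  have hg_int : ∀ ξ : EuclideanSpace ℝ (Fin N),
      Integrable (fun z : EuclideanSpace ℝ (Fin N) =>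
        (1 - Real.cos (inner ℝ z ξ)) / ‖z‖ ^ 2) ν := by
    intro ξ
    refine Integrable.mono' (integrable_const (‖ξ‖ ^ 2 / 2)) (hg_meas ξ).aestronglyMeasurable
      (Filter.Eventually.of_forall fun z => ?_)
    rw [Real.norm_eq_abs, abs_of_nonneg (hg_nonneg ξ z)]
    exact hg_bound ξ z
  -- quadratic form scaling
  have hA : ∀ (κ : Measure (Metric.sphere (0 : EuclideanSpace ℝ (Fin N)) 1))
      (ξ : EuclideanSpace ℝ (Fin N)) (c : ℝ),
      ∫ σ, (inner ℝ (c • ξ) (σ : EuclideanSpace ℝ (Fin N)) : ℝ) ^ 2 ∂κ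
        = c ^ 2 * ∫ σ, (inner ℝ ξ (σ : EuclideanSpace ℝ (Fin N)) : ℝ) ^ 2 ∂κ := by
    intro κ ξ c
    rw [← integral_const_mul]
    congr 1
    ext σ
    rw [real_inner_smul_left]
    ring
  -- F scaling via the identity h
  have hFscale : ∀ (ξ : EuclideanSpace ℝ (Fin N)) (c : ℝ),
      ∫ z, (1 - Real.cos (inner ℝ z (c • ξ))) / ‖z‖ ^ 2 ∂ν
        = c ^ 2 * ∫ z, (1 - Real.cos (inner ℝ z ξ)) / ‖z‖ ^ 2 ∂ν := by
    intro ξ c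
    have h1 := h ξ
    have h2 := h (c • ξ)
    rw [hA lam ξ c, hA mu ξ c] at h2
    have h1' : c ^ 2 * ∫ σ, (inner ℝ ξ (σ : EuclideanSpace ℝ (Fin N)) : ℝ) ^ 2 ∂lam =
        c ^ 2 * ((1 / 2) * (∫ σ, (inner ℝ ξ (σ : EuclideanSpace ℝ (Fin N)) : ℝ) ^ 2 ∂mu) +
          ∫ z, (1 - Real.cos (inner ℝ z ξ)) / ‖z‖ ^ 2 ∂ν) := by rw [h1]
    linarith
  have hF0 : ∀ ξ : EuclideanSpace ℝ (Fin N),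
      ∫ z, (1 - Real.cos (inner ℝ z ξ)) / ‖z‖ ^ 2 ∂ν = 0 := by
    intro ξ
    set F : ℝ := ∫ z, (1 - Real.cos (inner ℝ z ξ)) / ‖z‖ ^ 2 ∂ν with hF
    have key : Filter.Tendsto (fun n : ℕ =>
        ∫ z, (((n:ℝ)+1) ^ 2)⁻¹ * ((1 - Real.cos (inner ℝ z ((((n:ℝ)+1)) • ξ))) / ‖z‖ ^ 2) ∂ν)
        Filter.atTop (nhds (∫ _z, (0:ℝ) ∂ν)) := by
      apply MeasureTheory.tendsto_integral_of_dominated_convergence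
        (fun z => ‖ξ‖ ^ 2 / 2)
      · intro n
        exact (measurable_const.mul (hg_meas _)).aestronglyMeasurable
      · exact integrable_const _
      · intro n
        refine Filter.Eventually.of_forall fun z => ?_
        have hb := hg_bound ((((n:ℝ)+1)) • ξ) z
        have hnn := hg_nonneg ((((n:ℝ)+1)) • ξ) z
        have hn1 : (0:ℝ) < ((n:ℝ)+1) ^ 2 := by positivity
        rw [Real.norm_eq_abs, abs_of_nonneg (by positivity)]
        have hns : ‖(((n:ℝ)+1)) • ξ‖ ^ 2 = ((n:ℝ)+1) ^ 2 * ‖ξ‖ ^ 2 := by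
          rw [norm_smul, mul_pow, Real.norm_eq_abs, sq_abs]
        rw [hns] at hb
        rw [inv_mul_le_iff₀ hn1]
        calc (1 - Real.cos (inner ℝ z ((((n:ℝ)+1)) • ξ))) / ‖z‖ ^ 2
            ≤ ((n:ℝ)+1) ^ 2 * ‖ξ‖ ^ 2 / 2 := hb
          _ = ((n:ℝ)+1) ^ 2 * (‖ξ‖ ^ 2 / 2) := by ring
      · refine Filter.Eventually.of_forall fun z => ?_
        rcases eq_or_ne z 0 with rfl | hz
        · have : ∀ n : ℕ, (((n:ℝ)+1) ^ 2)⁻¹ *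
              ((1 - Real.cos (inner ℝ (0 : EuclideanSpace ℝ (Fin N)) ((((n:ℝ)+1)) • ξ))) / ‖(0 : EuclideanSpace ℝ (Fin N))‖ ^ 2) = 0 := by
            intro n; simp
          simp only [this]
          exact tendsto_const_nhds
        · have hz2 : (0:ℝ) < ‖z‖ ^ 2 := pow_pos (norm_pos_iff.mpr hz) 2
          have hub : ∀ n : ℕ, (((n:ℝ)+1) ^ 2)⁻¹ *
              ((1 - Real.cos (inner ℝ z ((((n:ℝ)+1)) • ξ))) / ‖z‖ ^ 2)
              ≤ (((n:ℝ)+1) ^ 2)⁻¹ * (2 / ‖z‖ ^ 2) := by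
            intro n
            have hn1 : (0:ℝ) < ((n:ℝ)+1) ^ 2 := by positivity
            apply mul_le_mul_of_nonneg_left _ (by positivity)
            rw [div_le_div_iff₀ hz2 hz2]
            nlinarith [Real.neg_one_le_cos (inner ℝ z ((((n:ℝ)+1)) • ξ) : ℝ)]
          have hlb : ∀ n : ℕ, (0:ℝ) ≤ (((n:ℝ)+1) ^ 2)⁻¹ *
              ((1 - Real.cos (inner ℝ z ((((n:ℝ)+1)) • ξ))) / ‖z‖ ^ 2) := fun n =>
            mul_nonneg (by positivity) (hg_nonneg _ z)
          have hlim : Filter.Tendsto (fun n : ℕ => (((n:ℝ)+1) ^ 2)⁻¹ * (2 / ‖z‖ ^ 2))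
              Filter.atTop (nhds 0) := by
            have : Filter.Tendsto (fun n : ℕ => (((n:ℝ)+1) ^ 2)⁻¹) Filter.atTop (nhds 0) := by
              apply Filter.Tendsto.inv_tendsto_atTop
              apply Filter.tendsto_atTop_mono (fun n : ℕ => by nlinarith [Nat.cast_nonneg (α := ℝ) n] : ∀ n : ℕ, (n:ℝ) ≤ ((n:ℝ)+1) ^ 2)
              exact tendsto_natCast_atTop_atTop
            simpa using this.mul_const (2 / ‖z‖ ^ 2)
          exact squeeze_zero hlb hub hlim
    have hconst : ∀ n : ℕ,
        ∫ z, (((n:ℝ)+1) ^ 2)⁻¹ * ((1 - Real.cos (inner ℝ z ((((n:ℝ)+1)) • ξ))) / ‖z‖ ^ 2) ∂ν = F := by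
      intro n
      rw [integral_const_mul, hFscale ξ ((n:ℝ)+1)]
      have hn1 : ((n:ℝ)+1) ^ 2 ≠ 0 := by positivity
      rw [inv_mul_cancel_left₀ hn1]
    have key0 : Filter.Tendsto (fun n : ℕ =>
        ∫ z, (((n:ℝ)+1) ^ 2)⁻¹ * ((1 - Real.cos (inner ℝ z ((((n:ℝ)+1)) • ξ))) / ‖z‖ ^ 2) ∂ν)
        Filter.atTop (nhds 0) := by simpa using key
    simp only [hconst] at key0
    exact tendsto_nhds_unique tendsto_const_nhds key0
  constructor
  · intro ξ
    have := h ξ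
    rw [hF0 ξ] at this
    linarith
  · -- ν = 0
    have hae : ∀ ξ : EuclideanSpace ℝ (Fin N), ∀ᵐ z ∂ν,
        (1 - Real.cos (inner ℝ z ξ)) / ‖z‖ ^ 2 = 0 := by
      intro ξ
      have := (integral_eq_zero_iff_of_nonneg (fun z => hg_nonneg ξ z) (hg_int ξ)).mp (hF0 ξ)
      filter_upwards [this] with z hz using hz
    have hkey : ∀ᵐ z ∂ν, ∀ (q : ℚ) (i : Fin N),
        (1 - Real.cos (inner ℝ z ((q:ℝ) • EuclideanSpace.single i (1:ℝ)))) / ‖z‖ ^ 2 = 0 :=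
      ae_all_iff.mpr fun q => ae_all_iff.mpr fun i => hae _
    have hne : ∀ᵐ z ∂ν, z ≠ (0 : EuclideanSpace ℝ (Fin N)) := by
      rw [ae_iff]
      convert hν0 using 2
      ext z
      simp
    have hbot : ∀ᵐ (z : EuclideanSpace ℝ (Fin N)) ∂ν, False := by
      filter_upwards [hkey, hne] with z hz hz0
      have hznorm : (0:ℝ) < ‖z‖ ^ 2 := pow_pos (norm_pos_iff.mpr hz0) 2
      obtain ⟨i, hi⟩ : ∃ i, z i ≠ 0 := by
        by_contra hc
        push_neg at hc
        exact hz0 (PiLp.ext fun j => by simpa using hc j)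
      have hcosq : ∀ q : ℚ, Real.cos ((q:ℝ) * z i) = 1 := by
        intro q
        have h1 := hz q i
        rw [div_eq_zero_iff] at h1
        rcases h1 with h1 | h1
        · have h2 : (inner ℝ z ((q:ℝ) • EuclideanSpace.single i (1:ℝ)) : ℝ) = (q:ℝ) * z i := by
            rw [real_inner_smul_right, EuclideanSpace.inner_single_right]
            simp
          rw [h2] at h1
          linarith
        · exact absurd h1 (ne_of_gt hznorm)
      have hcosall : ∀ t : ℝ, Real.cos (t * z i) = 1 := by
        have hfeq : (fun t : ℝ => Real.cos (t * z i)) = fun _ => (1:ℝ) := by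
          apply Continuous.ext_on Rat.denseRange_cast
            (Real.continuous_cos.comp (continuous_id.mul continuous_const)) continuous_const
          rintro _ ⟨q, rfl⟩
          exact hcosq q
        intro t
        exact congrFun hfeq t
      have := hcosall (Real.pi / z i)
      rw [div_mul_cancel₀ _ hi, Real.cos_pi] at this
      linarith
    have : ν Set.univ = 0 := by
      have := hbot
      rw [ae_iff] at this
      simpa using this
    exact Measure.measure_univ_eq_zero.mp this
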